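/- Let V_ν(r) = ((r² + a²)z - aν)²/μ(r) for fixed ν ∈ ℝ and z = ±1, on (r₊, ∞). Every critical point of V_ν in (r₊, ∞) satisfies V_ν'' > 0 at that point; consequently V_ν has at most one critical point in (r₊, ∞), and if (r₊² + a²)z - aν ≠ 0 then V_ν has exactly one critical point r_min ∈ (r₊, ∞), which is a strict global minimum on (r₊, ∞). -/

import Mathlib

open Real Set

noncomputable def muf (m a r : ℝ) : ℝ := r^2 - 2*m*r + a^2
noncomputable def Qf (a c r : ℝ) : ℝ := r^2 + a^2 - c
noncomputable def gf (m a c r : ℝ) : ℝ := 4*r*(muf m a r) - (Qf a c r)*(2*r-2*m)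
noncomputable def gf' (m a c r : ℝ) : ℝ := 4*(muf m a r) + 2*r*(2*r-2*m) - 2*(Qf a c r)
noncomputable def Nf (m a c r : ℝ) : ℝ := Qf a c r * gf m a c r
noncomputable def Nf' (m a c r : ℝ) : ℝ := 2*r*(gf m a c r) + (Qf a c r)*(gf' m a c r)
noncomputable def Df (m a c : ℝ) (r : ℝ) : ℝ := Nf m a c r / (muf m a r)^2
noncomputable def Wf (m a c : ℝ) (r : ℝ) : ℝ := (Qf a c r)^2 / (muf m a r)
noncomputable def phif (m a : ℝ) (r : ℝ) : ℝ := r^2 + a^2 - 4*r*(muf m a r)/(2*r-2*m)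

lemma hasDerivAt_muf (m a r : ℝ) : HasDerivAt (muf m a) (2*r - 2*m) r := by
  show HasDerivAt (fun r : ℝ => r^2 - 2*m*r + a^2) (2*r - 2*m) r
  have h := (((hasDerivAt_pow 2 r).sub ((hasDerivAt_id r).const_mul (2*m))).add_const (a^2))
  refine h.congr_deriv ?_
  ring

lemma hasDerivAt_Qf (a c r : ℝ) : HasDerivAt (Qf a c) (2*r) r := by
  show HasDerivAt (fun r : ℝ => r^2 + a^2 - c) (2*r) r
  have h := ((hasDerivAt_pow 2 r).add_const (a^2)).sub_const c
  refine h.congr_deriv ?_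
  ring

lemma hasDerivAt_gf (m a c r : ℝ) : HasDerivAt (gf m a c) (gf' m a c r) r := by
  have h := (((hasDerivAt_id r).const_mul 4).mul (hasDerivAt_muf m a r)).sub
    ((hasDerivAt_Qf a c r).mul (((hasDerivAt_id r).const_mul 2).sub_const (2*m)))
  refine h.congr_deriv ?_
  simp only [gf', muf, Qf, id]; ring

lemma hasDerivAt_Nf (m a c r : ℝ) : HasDerivAt (Nf m a c) (Nf' m a c r) r := by
  have h := (hasDerivAt_Qf a c r).mul (hasDerivAt_gf m a c r)
  exact h

lemma hasDerivAt_Wf (m a c r : ℝ) (h0 : muf m a r ≠ 0) :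
    HasDerivAt (Wf m a c) (Df m a c r) r := by
  have h := ((hasDerivAt_Qf a c r).pow 2).div (hasDerivAt_muf m a r) h0
  refine h.congr_deriv ?_
  simp only [Df, Nf, gf, Qf, Pi.pow_apply]
  field_simp
  ring

lemma hasDerivAt_Df (m a c r : ℝ) (h0 : muf m a r ≠ 0) :
    HasDerivAt (Df m a c)
      ((Nf' m a c r * (muf m a r)^2 - Nf m a c r * (2 * muf m a r * (2*r-2*m))) / ((muf m a r)^2)^2) r := by
  have h := (hasDerivAt_Nf m a c r).div ((hasDerivAt_muf m a r).pow 2) (pow_ne_zero 2 h0)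
  refine h.congr_deriv ?_
  simp only [Pi.pow_apply]
  ring

noncomputable def phif' (m a r : ℝ) : ℝ :=
  2*r - ((4*(muf m a r) + 4*r*(2*r-2*m))*(2*r-2*m) - 4*r*(muf m a r)*2)/(2*r-2*m)^2

noncomputable def gpoly (m a r : ℝ) : ℝ := r^3 - 3*m*r^2 + (4*m^2-a^2)*r - m*a^2

lemma sq_sqrt' {m a : ℝ} (ha2 : a^2 < m^2) : (Real.sqrt (m^2 - a^2))^2 = m^2 - a^2 :=
  Real.sq_sqrt (by nlinarith)

lemma sqrt_pos' {m a : ℝ} (ha2 : a^2 < m^2) : 0 < Real.sqrt (m^2 - a^2) :=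
  Real.sqrt_pos.2 (by nlinarith)

lemma rp_gt_m {m a : ℝ} (ha2 : a^2 < m^2) : m < m + Real.sqrt (m^2 - a^2) := by
  linarith [sqrt_pos' ha2]

lemma sqrt_le_m {m a : ℝ} (hm : 0 < m) (ha2 : a^2 < m^2) : Real.sqrt (m^2 - a^2) ≤ m := by
  nlinarith [sq_sqrt' ha2, sqrt_pos' ha2, sq_nonneg a]

lemma mu_rp {m a : ℝ} (ha2 : a^2 < m^2) : muf m a (m + Real.sqrt (m^2 - a^2)) = 0 := by
  have h := sq_sqrt' ha2
  simp only [muf]; nlinarith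

lemma mu_pos {m a r : ℝ} (ha2 : a^2 < m^2) (hr : m + Real.sqrt (m^2 - a^2) < r) :
    0 < muf m a r := by
  have h := sq_sqrt' ha2
  have h2 := sqrt_pos' ha2
  simp only [muf]; nlinarith

lemma gpoly_pos {m a r : ℝ} (hm : 0 < m) (ha2 : a^2 < m^2)
    (hr : m + Real.sqrt (m^2 - a^2) < r) : 0 < gpoly m a r := by
  have h1 := mu_pos ha2 hr
  have h3 : m < r := lt_trans (rp_gt_m ha2) hr
  have key : gpoly m a r = (r - m) * muf m a r + 2*(m^2-a^2)*r := by
    simp only [gpoly, muf]; ring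
  rw [key]
  have : 0 < r := lt_trans hm h3
  nlinarith [mul_pos (sub_pos.2 h3) h1]

lemma hasDerivAt_phif {m a r : ℝ} (hr : m < r) : HasDerivAt (phif m a) (phif' m a r) r := by
  have hne : 2*r - 2*m ≠ 0 := by intro h; linarith
  have h := ((hasDerivAt_pow 2 r).add_const (a^2)).sub
    ((((hasDerivAt_id r).const_mul 4).mul (hasDerivAt_muf m a r)).div
      (((hasDerivAt_id r).const_mul 2).sub_const (2*m)) hne)
  refine h.congr_deriv ?_
  simp only [phif', id, Pi.mul_apply]; ring

lemma phif'_neg {m a r : ℝ} (hm : 0 < m) (ha2 : a^2 < m^2)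
    (hr : m + Real.sqrt (m^2 - a^2) < r) : phif' m a r < 0 := by
  have h1 := mu_pos ha2 hr
  have h2 := gpoly_pos hm ha2 hr
  have h3 : m < r := lt_trans (rp_gt_m ha2) hr
  have hne : 2*r - 2*m ≠ 0 := by intro h; linarith
  have hne2 : r - m ≠ 0 := sub_ne_zero.mpr (ne_of_gt h3)
  have key : phif' m a r * (2*r-2*m)^2 = -2*(2*(gpoly m a r) + (muf m a r)*(2*r-2*m)) := by
    simp only [phif', muf, gpoly]; field_simp; ring
  nlinarith [sq_nonneg (2*r-2*m), mul_pos h1 (by linarith : (0:ℝ) < 2*r-2*m),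
    pow_pos (show (0:ℝ) < 2*r-2*m by linarith) 2]

lemma phif_rp {m a : ℝ} (ha2 : a^2 < m^2) :
    phif m a (m + Real.sqrt (m^2 - a^2)) = (m + Real.sqrt (m^2 - a^2))^2 + a^2 := by
  simp only [phif, mu_rp ha2]; ring

lemma continuousOn_phif {m a : ℝ} (ha2 : a^2 < m^2) {s : Set ℝ}
    (hs : s ⊆ Ici (m + Real.sqrt (m^2 - a^2))) : ContinuousOn (phif m a) s := by
  apply ContinuousOn.sub (Continuous.continuousOn (by continuity))
  apply ContinuousOn.div
  · apply Continuous.continuousOn; simp only [muf]; continuity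
  · exact Continuous.continuousOn (by continuity)
  · intro x hx
    have : m < x := lt_of_lt_of_le (rp_gt_m ha2) (hs hx)
    intro h; linarith

lemma phif_strictAnti {m a : ℝ} (hm : 0 < m) (ha2 : a^2 < m^2) :
    StrictAntiOn (phif m a) (Ici (m + Real.sqrt (m^2 - a^2))) := by
  apply strictAntiOn_of_deriv_neg (convex_Ici _) (continuousOn_phif ha2 subset_rfl)
  intro x hx
  rw [interior_Ici] at hx
  rw [(hasDerivAt_phif (lt_trans (rp_gt_m ha2) hx)).deriv]
  exact phif'_neg hm ha2 hx

lemma gf_eq_phif {m a c r : ℝ} (hr : m < r) :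
    gf m a c r = (c - phif m a r) * (2*r - 2*m) := by
  have hne : 2*r - 2*m ≠ 0 := by intro h; linarith
  have hne2 : r - m ≠ 0 := sub_ne_zero.mpr (ne_of_gt hr)
  simp only [gf, phif, Qf, muf]
  field_simp
  ring

lemma Nf'_pos {m a c r : ℝ} (hm : 0 < m) (ha2 : a^2 < m^2)
    (hr : m + Real.sqrt (m^2 - a^2) < r) (hN : Nf m a c r = 0) : 0 < Nf' m a c r := by
  have hμ := mu_pos ha2 hr
  have hrm : m < r := lt_trans (rp_gt_m ha2) hr
  have hr0 : 0 < r := lt_trans hm hrm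
  have hμ' : 0 < 2*r - 2*m := by linarith
  rcases mul_eq_zero.mp hN with hQ | hg
  · have key : Nf' m a c r = 8*r^2*(muf m a r) := by
      simp only [Nf', gf, gf', Qf, muf] at *
      linear_combination (4*(r^2-2*m*r+a^2) - 2*(r^2+a^2-c)) * hQ
    rw [key]; positivity
  · have hgp := gpoly_pos hm ha2 hr
    have key : (2*r-2*m)^2 * Nf' m a c r
        = 8*r*(muf m a r)*(2*(gpoly m a r) + (muf m a r)*(2*r-2*m)) := by
      simp only [Nf', gf, gf', Qf, muf, gpoly] at *
      linear_combination (2*r*(2*r-2*m)^2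
        - (2*r-2*m)*(4*(r^2-2*m*r+a^2) + 2*r*(2*r-2*m) - 2*(r^2+a^2-c))
        + 8*r*(r^2-2*m*r+a^2)) * hg
    have hrhs : 0 < 8*r*(muf m a r)*(2*(gpoly m a r) + (muf m a r)*(2*r-2*m)) := by
      have := mul_pos hμ hμ'
      positivity
    have hK : (0:ℝ) < (2*r-2*m)^2 := by positivity
    by_contra hcon
    push_neg at hcon
    nlinarith [mul_nonpos_of_nonneg_of_nonpos hK.le hcon]

lemma crit_N_zero {m a c r : ℝ} (ha2 : a^2 < m^2)
    (hr : m + Real.sqrt (m^2 - a^2) < r) (hcrit : deriv (Wf m a c) r = 0) :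
    Nf m a c r = 0 := by
  have hμne : muf m a r ≠ 0 := ne_of_gt (mu_pos ha2 hr)
  have hD0 : Df m a c r = 0 := by
    rw [← (hasDerivAt_Wf m a c r hμne).deriv]; exact hcrit
  simp only [Df] at hD0
  exact (div_eq_zero_iff.mp hD0).resolve_right (pow_ne_zero 2 hμne)

lemma deriv2_pos {m a c r : ℝ} (hm : 0 < m) (ha2 : a^2 < m^2)
    (hr : m + Real.sqrt (m^2 - a^2) < r) (hcrit : deriv (Wf m a c) r = 0) :
    0 < deriv (deriv (Wf m a c)) r := by
  have hμ := mu_pos ha2 hr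
  have hμne : muf m a r ≠ 0 := ne_of_gt hμ
  have hN := crit_N_zero ha2 hr hcrit
  have hev : deriv (Wf m a c) =ᶠ[nhds r] Df m a c := by
    filter_upwards [Ioi_mem_nhds hr] with x hx
    exact (hasDerivAt_Wf m a c x (ne_of_gt (mu_pos ha2 hx))).deriv
  rw [hev.deriv_eq, (hasDerivAt_Df m a c r hμne).deriv, hN]
  simp only [zero_mul, sub_zero]
  have hN' := Nf'_pos hm ha2 hr hN
  positivity

lemma g_zero_phif {m a c r : ℝ} (ha2 : a^2 < m^2) (hr : m + Real.sqrt (m^2 - a^2) < r)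
    (hg : gf m a c r = 0) : phif m a r = c := by
  have hrm : m < r := lt_trans (rp_gt_m ha2) hr
  have hne : 2*r - 2*m ≠ 0 := by intro h; linarith
  rw [gf_eq_phif hrm] at hg
  rcases mul_eq_zero.mp hg with h | h
  · linarith
  · exact absurd h hne

lemma crit_unique {m a c r₁ r₂ : ℝ} (hm : 0 < m) (ha2 : a^2 < m^2)
    (h1 : m + Real.sqrt (m^2 - a^2) < r₁) (h2 : m + Real.sqrt (m^2 - a^2) < r₂)
    (hc1 : deriv (Wf m a c) r₁ = 0) (hc2 : deriv (Wf m a c) r₂ = 0) : r₁ = r₂ := by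
  set rp := m + Real.sqrt (m^2 - a^2) with hrp
  have hrppos : 0 < rp := lt_trans hm (rp_gt_m ha2)
  have hr1pos : 0 < r₁ := lt_trans hrppos h1
  have hr2pos : 0 < r₂ := lt_trans hrppos h2
  have hφanti := phif_strictAnti hm ha2
  have hφrp := phif_rp (m := m) (a := a) ha2
  have hmix : ∀ x y : ℝ, rp < x → rp < y → Qf a c x = 0 → gf m a c y = 0 → False := by
    intro x y hx hy hQ hgy
    have hφy : phif m a y = c := g_zero_phif ha2 hy hgy
    have hlt : phif m a y < phif m a rp := hφanti (self_mem_Ici) (le_of_lt hy) hy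
    rw [hφrp, hφy] at hlt
    simp only [Qf] at hQ
    have hxrp : 0 < x := lt_trans hrppos hx
    nlinarith
  rcases mul_eq_zero.mp (crit_N_zero ha2 h1 hc1) with hQ1 | hg1 <;>
    rcases mul_eq_zero.mp (crit_N_zero ha2 h2 hc2) with hQ2 | hg2
  · simp only [Qf] at hQ1 hQ2
    by_contra hne
    rcases lt_or_gt_of_ne hne with h | h <;> nlinarith
  · exact absurd (hmix r₁ r₂ h1 h2 hQ1 hg2) not_false
  · exact absurd (hmix r₂ r₁ h2 h1 hQ2 hg1) not_false
  · have hφ1 : phif m a r₁ = c := g_zero_phif ha2 h1 hg1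
    have hφ2 : phif m a r₂ = c := g_zero_phif ha2 h2 hg2
    exact hφanti.injOn (le_of_lt h1) (le_of_lt h2) (hφ1.trans hφ2.symm)

lemma continuousOn_Wf {m a c : ℝ} (ha2 : a^2 < m^2) {s : Set ℝ}
    (hs : s ⊆ Ioi (m + Real.sqrt (m^2 - a^2))) : ContinuousOn (Wf m a c) s := by
  unfold Wf Qf muf
  apply ContinuousOn.div (Continuous.continuousOn (by continuity))
    (Continuous.continuousOn (by continuity))
  intro x hx
  exact ne_of_gt (mu_pos ha2 (hs hx))

lemma deriv_Wf_eq {m a c x : ℝ} (ha2 : a^2 < m^2)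
    (hx : m + Real.sqrt (m^2 - a^2) < x) : deriv (Wf m a c) x = Df m a c x :=
  (hasDerivAt_Wf m a c x (ne_of_gt (mu_pos ha2 hx))).deriv

/-- Assembly: from a critical point with the right sign pattern, get the minimum claim. -/
lemma min_assembly {m a c rmin : ℝ} (hm : 0 < m) (ha2 : a^2 < m^2)
    (hrmin : m + Real.sqrt (m^2 - a^2) < rmin)
    (hN0 : Nf m a c rmin = 0)
    (hneg : ∀ x, m + Real.sqrt (m^2 - a^2) < x → x < rmin → Df m a c x < 0)
    (hpos : ∀ x, rmin < x → 0 < Df m a c x) :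
    m + Real.sqrt (m^2 - a^2) < rmin ∧ deriv (Wf m a c) rmin = 0 ∧
      ∀ r, m + Real.sqrt (m^2 - a^2) < r → r ≠ rmin → Wf m a c rmin < Wf m a c r := by
  set rp := m + Real.sqrt (m^2 - a^2) with hrpdef
  refine ⟨hrmin, ?_, ?_⟩
  · rw [deriv_Wf_eq ha2 hrmin]
    simp [Df, hN0]
  · intro r hr hrne
    rcases lt_or_gt_of_ne hrne with h | h
    · have hanti : StrictAntiOn (Wf m a c) (Icc r rmin) := by
        apply strictAntiOn_of_deriv_neg (convex_Icc _ _)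
          (continuousOn_Wf ha2 (fun x hx => lt_of_lt_of_le hr hx.1))
        intro x hx
        rw [interior_Icc] at hx
        rw [deriv_Wf_eq ha2 (lt_trans hr hx.1)]
        exact hneg x (lt_trans hr hx.1) hx.2
      exact hanti ⟨le_refl r, le_of_lt h⟩ ⟨le_of_lt h, le_refl rmin⟩ h
    · have hmono : StrictMonoOn (Wf m a c) (Icc rmin r) := by
        apply strictMonoOn_of_deriv_pos (convex_Icc _ _)
          (continuousOn_Wf ha2 (fun x hx => lt_of_lt_of_le hrmin hx.1))
        intro x hx
        rw [interior_Icc] at hx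
        rw [deriv_Wf_eq ha2 (lt_trans hrmin hx.1)]
        exact hpos x hx.1
      exact hmono ⟨le_refl rmin, le_of_lt h⟩ ⟨le_of_lt h, le_refl r⟩ h

lemma Q_pos_of_gt {a c x rp : ℝ} (hrp : 0 < rp) (hc : c < rp^2 + a^2) (hx : rp < x) :
    0 < Qf a c x := by
  simp only [Qf]; nlinarith

/-- Case A: `c < rp² + a²`. -/
lemma exists_min_A {m a c : ℝ} (hm : 0 < m) (ha2 : a^2 < m^2)
    (hlt : c < (m + Real.sqrt (m^2 - a^2))^2 + a^2) :
    ∃ rmin, m + Real.sqrt (m^2 - a^2) < rmin ∧ Nf m a c rmin = 0 ∧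
      (∀ x, m + Real.sqrt (m^2 - a^2) < x → x < rmin → Df m a c x < 0) ∧
      (∀ x, rmin < x → 0 < Df m a c x) := by
  set rp := m + Real.sqrt (m^2 - a^2) with hrpdef
  have hrpm : m < rp := rp_gt_m ha2
  have hrppos : 0 < rp := lt_trans hm hrpm
  have hsm : Real.sqrt (m^2 - a^2) ≤ m := sqrt_le_m hm ha2
  set R : ℝ := max (3*m+1) (|c|+1) with hRdef
  have hR3 : 3*m+1 ≤ R := le_max_left _ _
  have hRc : |c|+1 ≤ R := le_max_right _ _
  have habs := abs_nonneg c
  have hrpR : rp < R := by rw [hrpdef]; linarith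
  have hmR : m < R := lt_trans hrpm hrpR
  have hgR : 0 < gf m a c R := by
    simp only [gf, Qf, muf]
    have h1 : 0 ≤ R^2*(R-3*m-1) := mul_nonneg (sq_nonneg R) (by linarith)
    have h2 : (- |c|) * (R-m) ≤ c*(R-m) :=
      mul_le_mul_of_nonneg_right (neg_abs_le c) (by linarith)
    have h3 : |c| * (R-m) ≤ |c| * R := mul_le_mul_of_nonneg_left (by linarith) habs
    have h4 : 0 ≤ R * (R - |c| - 1) := mul_nonneg (by linarith) (by linarith)
    nlinarith [sq_nonneg a]
  have hφR : phif m a R < c := by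
    rw [gf_eq_phif hmR] at hgR
    nlinarith [hgR, (by linarith : (0:ℝ) < 2*R-2*m), mul_pos (show (0:ℝ) < 2*R-2*m by linarith) (show 0 < c - phif m a R from by nlinarith [mul_pos_iff.mp hgR])]
  have hφrp : c < phif m a rp := by rw [hrpdef, phif_rp ha2]; rw [hrpdef] at hlt; exact hlt
  have hivt := intermediate_value_Icc' (le_of_lt hrpR)
    (continuousOn_phif ha2 (Icc_subset_Ici_self) (m := m) (a := a))
  have hcmem : c ∈ Icc (phif m a R) (phif m a rp) := ⟨le_of_lt hφR, le_of_lt hφrp⟩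
  obtain ⟨r₀, hr₀mem, hφr₀⟩ := hivt hcmem
  have hr₀ : rp < r₀ := by
    rcases eq_or_lt_of_le hr₀mem.1 with h | h
    · exact absurd (h ▸ hφr₀) (ne_of_gt hφrp)
    · exact h
  have hφanti := phif_strictAnti hm ha2
  refine ⟨r₀, hr₀, ?_, ?_, ?_⟩
  · simp only [Nf]
    rw [gf_eq_phif (lt_trans hrpm hr₀), hφr₀]
    ring
  · intro x hx hxr₀
    have hQx : 0 < Qf a c x := Q_pos_of_gt hrppos hlt hx
    have hφx : c < phif m a x := by
      rw [← hφr₀]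
      exact hφanti (le_of_lt hx) (le_of_lt hr₀) hxr₀
    have hgx : gf m a c x < 0 := by
      rw [gf_eq_phif (lt_trans hrpm hx)]
      apply mul_neg_of_neg_of_pos (by linarith)
      linarith [lt_trans hrpm hx]
    simp only [Df, Nf]
    apply div_neg_of_neg_of_pos (mul_neg_of_pos_of_neg hQx hgx)
    exact pow_pos (mu_pos ha2 hx) 2
  · intro x hx
    have hrpx : rp < x := lt_trans hr₀ hx
    have hQx : 0 < Qf a c x := Q_pos_of_gt hrppos hlt hrpx
    have hφx : phif m a x < c := by
      rw [← hφr₀]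
      exact hφanti (le_of_lt hr₀) (le_of_lt hrpx) hx
    have hgx : 0 < gf m a c x := by
      rw [gf_eq_phif (lt_trans hrpm hrpx)]
      apply mul_pos (by linarith)
      linarith [lt_trans hrpm hrpx]
    exact div_pos (mul_pos hQx hgx) (pow_pos (mu_pos ha2 hrpx) 2)

/-- Case B: `c > rp² + a²`. -/
lemma exists_min_B {m a c : ℝ} (hm : 0 < m) (ha2 : a^2 < m^2)
    (hgt : (m + Real.sqrt (m^2 - a^2))^2 + a^2 < c) :
    ∃ rmin, m + Real.sqrt (m^2 - a^2) < rmin ∧ Nf m a c rmin = 0 ∧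
      (∀ x, m + Real.sqrt (m^2 - a^2) < x → x < rmin → Df m a c x < 0) ∧
      (∀ x, rmin < x → 0 < Df m a c x) := by
  set rp := m + Real.sqrt (m^2 - a^2) with hrpdef
  have hrpm : m < rp := rp_gt_m ha2
  have hrppos : 0 < rp := lt_trans hm hrpm
  have hca : 0 < c - a^2 := by nlinarith
  set rmin : ℝ := Real.sqrt (c - a^2) with hrmindef
  have hrmin2 : rmin^2 = c - a^2 := Real.sq_sqrt (le_of_lt hca)
  have hrpmin : rp < rmin := by
    rw [hrmindef]
    rw [show rp = m + Real.sqrt (m^2-a^2) from hrpdef] at hgt ⊢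
    exact (Real.lt_sqrt (le_of_lt hrppos)).2 (by nlinarith)
  have hrminpos : 0 < rmin := lt_trans hrppos hrpmin
  have hQ0 : Qf a c rmin = 0 := by simp only [Qf]; linarith
  have hφanti := phif_strictAnti hm ha2
  have hg_pos : ∀ x, rp < x → 0 < gf m a c x := by
    intro x hx
    have hφx : phif m a x < phif m a rp := hφanti self_mem_Ici (le_of_lt hx) hx
    rw [hrpdef, phif_rp ha2, ← hrpdef] at hφx
    rw [gf_eq_phif (lt_trans hrpm hx)]
    apply mul_pos (by nlinarith) (by linarith [lt_trans hrpm hx])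
  refine ⟨rmin, hrpmin, ?_, ?_, ?_⟩
  · simp only [Nf]; rw [hQ0]; ring
  · intro x hx hxmin
    have hQx : Qf a c x < 0 := by
      simp only [Qf]
      have : x^2 < rmin^2 := by nlinarith [lt_trans hrppos hx]
      nlinarith
    simp only [Df, Nf]
    apply div_neg_of_neg_of_pos (mul_neg_of_neg_of_pos hQx (hg_pos x hx))
    exact pow_pos (mu_pos ha2 hx) 2
  · intro x hx
    have hrpx : rp < x := lt_trans hrpmin hx
    have hQx : 0 < Qf a c x := by
      simp only [Qf]
      have : rmin^2 < x^2 := by nlinarith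
      nlinarith
    exact div_pos (mul_pos hQx (hg_pos x hrpx)) (pow_pos (mu_pos ha2 hrpx) 2)

theorem aux_main (m a c : ℝ) (hm : 0 < m) (ha2 : a^2 < m^2) :
    (∀ r, m + Real.sqrt (m^2 - a^2) < r → deriv (Wf m a c) r = 0 →
      0 < deriv (deriv (Wf m a c)) r) ∧
    (∀ r₁ r₂, m + Real.sqrt (m^2 - a^2) < r₁ → m + Real.sqrt (m^2 - a^2) < r₂ →
      deriv (Wf m a c) r₁ = 0 → deriv (Wf m a c) r₂ = 0 → r₁ = r₂) ∧
    ((m + Real.sqrt (m^2 - a^2))^2 + a^2 - c ≠ 0 →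
      ∃ rmin, m + Real.sqrt (m^2 - a^2) < rmin ∧ deriv (Wf m a c) rmin = 0 ∧
        ∀ r, m + Real.sqrt (m^2 - a^2) < r → r ≠ rmin → Wf m a c rmin < Wf m a c r) := by
  refine ⟨fun r hr h => deriv2_pos hm ha2 hr h,
    fun r₁ r₂ h1 h2 hc1 hc2 => crit_unique hm ha2 h1 h2 hc1 hc2, fun hne => ?_⟩
  rcases lt_trichotomy c ((m + Real.sqrt (m^2 - a^2))^2 + a^2) with h | h | h
  · obtain ⟨rmin, hr, hN, hneg, hpos⟩ := exists_min_A hm ha2 h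
    obtain ⟨h1, h2, h3⟩ := min_assembly hm ha2 hr hN hneg hpos
    exact ⟨rmin, h1, h2, h3⟩
  · exact absurd (by linarith) hne
  · obtain ⟨rmin, hr, hN, hneg, hpos⟩ := exists_min_B hm ha2 h
    obtain ⟨h1, h2, h3⟩ := min_assembly hm ha2 hr hN hneg hpos
    exact ⟨rmin, h1, h2, h3⟩

theorem kerr_potential_unique_minimum (m a ν z : ℝ) (hm : 0 < m)
    (ha : -m < a ∧ a < m) (hz : z = 1 ∨ z = -1) :
    let rp : ℝ := m + Real.sqrt (m ^ 2 - a ^ 2)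
    let V : ℝ → ℝ := fun r => ((r ^ 2 + a ^ 2) * z - a * ν) ^ 2 / (r ^ 2 - 2 * m * r + a ^ 2)
    (∀ r, rp < r → deriv V r = 0 → 0 < deriv (deriv V) r) ∧
    (∀ r₁ r₂, rp < r₁ → rp < r₂ → deriv V r₁ = 0 → deriv V r₂ = 0 → r₁ = r₂) ∧
    ((rp ^ 2 + a ^ 2) * z - a * ν ≠ 0 →
      ∃ rmin, rp < rmin ∧ deriv V rmin = 0 ∧
        ∀ r, rp < r → r ≠ rmin → V rmin < V r) := by
  intro rp V
  have ha2 : a^2 < m^2 := by nlinarith [ha.1, ha.2]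
  have hz2 : z^2 = 1 := by rcases hz with h | h <;> rw [h] <;> norm_num
  have hVW : V = Wf m a (a*ν*z) := by
    funext r
    show ((r ^ 2 + a ^ 2) * z - a * ν) ^ 2 / (r ^ 2 - 2 * m * r + a ^ 2) = Wf m a (a*ν*z) r
    simp only [Wf, Qf, muf]
    congr 1
    linear_combination ((r^2+a^2)^2 - a^2*ν^2) * hz2
  rw [hVW]
  obtain ⟨A1, A2, A3⟩ := aux_main m a (a*ν*z) hm ha2
  refine ⟨A1, A2, fun hne => A3 ?_⟩
  intro h0
  apply hne
  linear_combination z * h0 + a * ν * hz2
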